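/- Let A and B be n-by-n weighted shift matrices (n ≥ 3) with weights a_1, …, a_n and b_1, …, b_n respectively. If A is unitarily equivalent to B, then the multisets {|a_1|, |a_2|, …, |a_n|} and {|b_1|, |b_2|, …, |b_n|} are equal (counting multiplicities); equivalently, there is a permutation σ of {1, …, n} with |b_j| = |a_{σ(j)}| for all j. -/

import Mathlib

open Matrix Polynomial

/-- The n-by-n weighted shift matrix with weights `a 0, …, a (n-1)`
(representing `a_1, …, a_n`): the `(i, i+1)` entry is `a i` (cyclically). -/
def wsMatrix {n : ℕ} (a : Fin n → ℂ) : Matrix (Fin n) (Fin n) ℂ :=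
  fun i j => if (j : ℕ) = ((i : ℕ) + 1) % n then a i else 0

/-- Two square complex matrices are unitarily equivalent if `B = U* A U`
for some unitary `U`. -/
def UnitarilyEquiv {n : ℕ} (A B : Matrix (Fin n) (Fin n) ℂ) : Prop :=
  ∃ U : Matrix (Fin n) (Fin n) ℂ, U ∈ Matrix.unitaryGroup (Fin n) ℂ ∧ B = Uᴴ * A * U

lemma perm_of_multiset_eq {α : Type*} [LinearOrder α] {n : ℕ} {f g : Fin n → α}
    (h : Multiset.map f Finset.univ.val = Multiset.map g Finset.univ.val) :
    ∃ σ : Equiv.Perm (Fin n), ∀ j, g j = f (σ j) := by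
  have hperm : List.Perm (List.ofFn g) (List.ofFn f) := by
    rw [← Multiset.coe_eq_coe, ← Fin.univ_val_map, ← Fin.univ_val_map]
    exact h.symm
  have h1 : List.Perm (List.ofFn (g ∘ Tuple.sort g)) (List.ofFn (f ∘ Tuple.sort f)) :=
    ((Tuple.sort g).ofFn_comp_perm g).trans
      (hperm.trans ((Tuple.sort f).ofFn_comp_perm f).symm)
  have h2 : g ∘ Tuple.sort g = f ∘ Tuple.sort f :=
    List.ofFn_injective (List.Perm.eq_of_sortedLE
      (Tuple.monotone_sort g).sortedLE_ofFn (Tuple.monotone_sort f).sortedLE_ofFn h1)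
  refine ⟨(Equiv.trans (Tuple.sort g).symm (Tuple.sort f)), fun j => ?_⟩
  have := congrFun h2 ((Tuple.sort g).symm j)
  simpa using this

lemma charpoly_unitary_conj {n : ℕ} (U M : Matrix (Fin n) (Fin n) ℂ)
    (hU : U ∈ Matrix.unitaryGroup (Fin n) ℂ) :
    (Uᴴ * M * U).charpoly = M.charpoly := by
  have h1 : Uᴴ * U = 1 := hU.1
  have h2 : U * Uᴴ = 1 := hU.2
  have key : charmatrix (Uᴴ * M * U) =
      (C : ℂ →+* ℂ[X]).mapMatrix Uᴴ * charmatrix M * (C : ℂ →+* ℂ[X]).mapMatrix U := by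
    have hc : Commute (Matrix.scalar (Fin n) (X : ℂ[X])) ((C : ℂ →+* ℂ[X]).mapMatrix Uᴴ) :=
      scalar_commute (X : ℂ[X]) (fun r => Commute.all _ _) _
    rw [charmatrix, charmatrix, mul_sub, sub_mul]
    congr 1
    · rw [← hc.eq, mul_assoc, ← _root_.map_mul, h1]
      simp
    · rw [← _root_.map_mul, ← _root_.map_mul]
  have hdet : ((C : ℂ →+* ℂ[X]).mapMatrix Uᴴ).det * ((C : ℂ →+* ℂ[X]).mapMatrix U).det = 1 := by
    rw [← det_mul, ← _root_.map_mul, h1]; simp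
  rw [Matrix.charpoly, key, det_mul, det_mul, Matrix.charpoly]
  linear_combination (charmatrix M).det * hdet

lemma charpoly_diag {n : ℕ} (d : Fin n → ℂ) :
    (Matrix.diagonal d).charpoly = ∏ i, (X - C (d i)) := by
  rw [Matrix.charpoly_of_upperTriangular _ (Matrix.blockTriangular_diagonal d)]
  simp

lemma ws_mul_conjTranspose {n : ℕ} (hn : 0 < n) (a : Fin n → ℂ) :
    wsMatrix a * (wsMatrix a)ᴴ =
      Matrix.diagonal (fun i => ((‖a i‖ : ℂ)) ^ 2) := by
  ext i j
  rw [Matrix.mul_apply]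
  have hterm : ∀ k : Fin n, wsMatrix a i k * (wsMatrix a)ᴴ k j =
      if ((k : ℕ) = ((i : ℕ) + 1) % n ∧ (k : ℕ) = ((j : ℕ) + 1) % n)
      then a i * star (a j) else 0 := by
    intro k
    simp only [wsMatrix, Matrix.conjTranspose_apply]
    by_cases h1 : (k : ℕ) = ((i : ℕ) + 1) % n <;>
      by_cases h2 : (k : ℕ) = ((j : ℕ) + 1) % n <;>
      simp [h1, h2] <;> split_ifs <;> simp_all
  simp only [hterm]
  by_cases hij : i = j
  · subst hij
    have h0 : ((i : ℕ) + 1) % n < n := Nat.mod_lt _ hn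
    have hsum : (∑ k : Fin n, if ((k : ℕ) = ((i : ℕ) + 1) % n ∧ (k : ℕ) = ((i : ℕ) + 1) % n)
        then a i * star (a i) else 0)
        = ∑ k : Fin n, if k = (⟨((i : ℕ) + 1) % n, h0⟩ : Fin n) then a i * star (a i) else 0 := by
      refine Finset.sum_congr rfl fun k _ => ?_
      congr 1
      simp [Fin.ext_iff]
    rw [hsum, Finset.sum_ite_eq' Finset.univ]
    simp only [Finset.mem_univ, if_true, Matrix.diagonal_apply_eq]
    rw [show star (a i) = (starRingEnd ℂ) (a i) from rfl, Complex.mul_conj,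
      ← Complex.ofReal_pow]
    norm_cast
    exact (Complex.sq_norm _).symm
  · have hne : ((i : ℕ) + 1) % n ≠ ((j : ℕ) + 1) % n := by
      intro hmod
      apply hij
      have : (i : ℕ) % n = (j : ℕ) % n := by
        have h3 : ((i : ℕ) + 1) ≡ ((j : ℕ) + 1) [MOD n] := hmod
        exact Nat.ModEq.add_right_cancel' 1 h3
      rw [Nat.mod_eq_of_lt i.isLt, Nat.mod_eq_of_lt j.isLt] at this
      exact Fin.ext this
    rw [Matrix.diagonal_apply_ne _ hij]
    apply Finset.sum_eq_zero
    intro k _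
    rw [if_neg]
    rintro ⟨hk1, hk2⟩
    exact hne (hk1 ▸ hk2)

theorem stmt2 (n : ℕ) (hn : 3 ≤ n) (a b : Fin n → ℂ)
    (h : UnitarilyEquiv (wsMatrix a) (wsMatrix b)) :
    ∃ σ : Equiv.Perm (Fin n), ∀ j, ‖b j‖ = ‖a (σ j)‖ := by
  obtain ⟨U, hU, hB⟩ := h
  have hnpos : 0 < n := by omega
  have hBBH : wsMatrix b * (wsMatrix b)ᴴ = Uᴴ * (wsMatrix a * (wsMatrix a)ᴴ) * U := by
    have h2 : U * Uᴴ = 1 := hU.2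
    rw [hB]
    calc (Uᴴ * wsMatrix a * U) * (Uᴴ * wsMatrix a * U)ᴴ
        = Uᴴ * wsMatrix a * (U * Uᴴ) * (wsMatrix a)ᴴ * U := by
          simp only [Matrix.conjTranspose_mul, Matrix.conjTranspose_conjTranspose]
          noncomm_ring
      _ = Uᴴ * (wsMatrix a * (wsMatrix a)ᴴ) * U := by rw [h2]; noncomm_ring
  have hcp : (wsMatrix b * (wsMatrix b)ᴴ).charpoly = (wsMatrix a * (wsMatrix a)ᴴ).charpoly := by
    rw [hBBH, charpoly_unitary_conj _ _ hU]
  rw [ws_mul_conjTranspose hnpos a, ws_mul_conjTranspose hnpos b,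
    charpoly_diag, charpoly_diag] at hcp
  -- roots
  have hroots : Multiset.map (fun j => ((‖b j‖ : ℂ)) ^ 2) Finset.univ.val
      = Multiset.map (fun i => ((‖a i‖ : ℂ)) ^ 2) Finset.univ.val := by
    have ra := Polynomial.roots_multiset_prod_X_sub_C
      (Multiset.map (fun i => ((‖a i‖ : ℂ)) ^ 2) Finset.univ.val)
    have rb := Polynomial.roots_multiset_prod_X_sub_C
      (Multiset.map (fun j => ((‖b j‖ : ℂ)) ^ 2) Finset.univ.val)
    rw [Multiset.map_map] at ra rb
    rw [← rb, ← ra, ← Finset.prod_eq_multiset_prod, ← Finset.prod_eq_multiset_prod]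
    simp only [Function.comp_def]
    rw [hcp]
  -- transfer to ℝ
  have hreal : Multiset.map (fun j => (‖b j‖) ^ 2) Finset.univ.val
      = Multiset.map (fun i => (‖a i‖) ^ 2) Finset.univ.val := by
    have := congrArg (Multiset.map Complex.re) hroots
    rw [Multiset.map_map, Multiset.map_map] at this
    simpa [Function.comp_def, ← Complex.ofReal_pow, Complex.ofReal_re] using this
  obtain ⟨σ, hσ⟩ := perm_of_multiset_eq hreal.symm
  refine ⟨σ, fun j => ?_⟩
  have h1 := norm_nonneg (b j)
  have h2 := norm_nonneg (a (σ j))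
  have := congrArg Real.sqrt (hσ j)
  rwa [Real.sqrt_sq h1, Real.sqrt_sq h2] at this
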